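/- For 0 ≤ k ≤ ⌊m/2⌋ and h ∈ H_{m-2k}, the composition A_{2-n} A_{4-n} acts on p = r^{2k} h as multiplication by (2m - 2k)(2m - 2k + 2)(2k + 2 - n)(2k + 4 - n). -/

import Mathlib

open MvPolynomial

noncomputable section

/-- The polynomial Laplacian `Δp = ∑ ∂²p/∂xᵢ²` on `ℝ^n`. -/
def pLap (n : ℕ) (p : MvPolynomial (Fin n) ℝ) : MvPolynomial (Fin n) ℝ :=
  ∑ i : Fin n, pderiv i (pderiv i p)

/-- The polynomial `r² = |x|² = ∑ xᵢ²`. -/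
def r2 (n : ℕ) : MvPolynomial (Fin n) ℝ := ∑ i : Fin n, X i ^ 2

/-- The radial derivative `r∂_r p = ∑ xᵢ ∂p/∂xᵢ`. -/
def prdr (n : ℕ) (p : MvPolynomial (Fin n) ℝ) : MvPolynomial (Fin n) ℝ :=
  ∑ i : Fin n, X i * pderiv i p

/-- The operator `A_α = r²Δ + 2α r∂_r + α(α+n-2)`. -/
def Apol (n : ℕ) (α : ℝ) (p : MvPolynomial (Fin n) ℝ) : MvPolynomial (Fin n) ℝ :=
  r2 n * pLap n p + C (2 * α) * prdr n p + C (α * (α + (n : ℝ) - 2)) * p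

/-- The operator `B_α = 2 r∂_r + (2α+n-2)`. -/
def Bpol (n : ℕ) (α : ℝ) (p : MvPolynomial (Fin n) ℝ) : MvPolynomial (Fin n) ℝ :=
  C 2 * prdr n p + C (2 * α + (n : ℝ) - 2) * p

/-! ### Auxiliary lemmas -/

lemma X_mul_pderiv_monomial (n : ℕ) (s : Fin n →₀ ℕ) (i : Fin n) (a : ℝ) :
    X i * pderiv i (monomial s a) = C ((s i : ℝ)) * monomial s a := by
  rw [pderiv_monomial]
  rcases Nat.eq_zero_or_pos (s i) with h | h
  · simp [h]
  · rw [X, monomial_mul, C_mul_monomial, one_mul, mul_comm a]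
    have : (Finsupp.single i 1 : Fin n →₀ ℕ) ≤ s := by rwa [Finsupp.single_le_iff]
    rw [add_comm, tsub_add_cancel_of_le this]

lemma prdr_monomial (n : ℕ) (s : Fin n →₀ ℕ) (a : ℝ) :
    prdr n (monomial s a) = C ((s.degree : ℝ)) * monomial s a := by
  unfold prdr
  rw [Finset.sum_congr rfl fun i _ => X_mul_pderiv_monomial n s i a, ← Finset.sum_mul,
    ← map_sum C]
  congr 2
  rw [Finsupp.degree_apply, Nat.cast_sum]
  exact (Finset.sum_subset (Finset.subset_univ _) (by simp)).symm

lemma prdr_add (n : ℕ) (p q : MvPolynomial (Fin n) ℝ) :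
    prdr n (p + q) = prdr n p + prdr n q := by
  simp [prdr, mul_add, Finset.sum_add_distrib]

/-- Euler's identity for homogeneous polynomials. -/
lemma euler (n d : ℕ) (p : MvPolynomial (Fin n) ℝ) (hp : p.IsHomogeneous d) :
    prdr n p = C ((d : ℝ)) * p := by
  classical
  conv_lhs => rw [p.as_sum]
  rw [show prdr n (∑ v ∈ p.support, (monomial v) (coeff v p))
      = ∑ v ∈ p.support, prdr n (monomial v (coeff v p)) by
    induction p.support using Finset.induction with
    | empty => simp [prdr]
    | insert _ _ h ih => rw [Finset.sum_insert h, Finset.sum_insert h, prdr_add, ih]]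
  conv_rhs => rw [p.as_sum, Finset.mul_sum]
  refine Finset.sum_congr rfl fun s hs => ?_
  rw [prdr_monomial]
  have : s.degree = d := by
    rw [Finsupp.degree_eq_weight_one]; exact hp (mem_support_iff.mp hs)
  rw [this]

lemma prdr_mul (n : ℕ) (p q : MvPolynomial (Fin n) ℝ) :
    prdr n (p * q) = prdr n p * q + p * prdr n q := by
  unfold prdr
  rw [Finset.sum_mul, Finset.mul_sum, ← Finset.sum_add_distrib]
  refine Finset.sum_congr rfl fun i _ => ?_
  rw [pderiv_mul]; ring

lemma prdr_C_mul (n : ℕ) (c : ℝ) (p : MvPolynomial (Fin n) ℝ) :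
    prdr n (C c * p) = C c * prdr n p := by
  unfold prdr
  rw [Finset.mul_sum]
  refine Finset.sum_congr rfl fun i _ => ?_
  rw [pderiv_C_mul]; ring

lemma pLap_C_mul (n : ℕ) (c : ℝ) (p : MvPolynomial (Fin n) ℝ) :
    pLap n (C c * p) = C c * pLap n p := by
  unfold pLap
  rw [Finset.mul_sum]
  refine Finset.sum_congr rfl fun i _ => ?_
  rw [pderiv_C_mul, pderiv_C_mul]

lemma Apol_C_mul (n : ℕ) (α c : ℝ) (p : MvPolynomial (Fin n) ℝ) :
    Apol n α (C c * p) = C c * Apol n α p := by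
  unfold Apol
  rw [pLap_C_mul, prdr_C_mul]; ring

lemma C_mul_congr {n : ℕ} {c₁ c₂ : ℝ} (p : MvPolynomial (Fin n) ℝ) (h : c₁ = c₂) :
    C c₁ * p = C c₂ * p := by rw [h]

lemma r2_isHomogeneous (n : ℕ) : (r2 n).IsHomogeneous 2 :=
  IsHomogeneous.sum _ _ _ fun i _ => (isHomogeneous_X ℝ i).pow 2

lemma pderiv_r2 (n : ℕ) (i : Fin n) : pderiv i (r2 n) = C 2 * X i := by
  unfold r2
  rw [map_sum, Finset.sum_eq_single i (fun j _ hji => by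
    rw [pderiv_pow, pderiv_X_of_ne hji, mul_zero]) (by simp)]
  rw [pderiv_pow, pderiv_X_self, mul_one, pow_one,
    show ((2 : ℕ) : MvPolynomial (Fin n) ℝ) = C 2 from by push_cast; rfl]

lemma pderiv_r2_pow (n k : ℕ) (i : Fin n) :
    pderiv i (r2 n ^ k) = C (2 * (k : ℝ)) * (X i * r2 n ^ (k - 1)) := by
  rw [pderiv_pow, pderiv_r2 n i, show ((k : ℕ) : MvPolynomial (Fin n) ℝ) = C ((k : ℝ))
    from (map_natCast C k).symm, C_mul]
  ring

/-- `r² · Δ(r^{2k} h) = 2k(2k+2d+n-2) r^{2k} h` for `h` harmonic homogeneous of degree `d`. -/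
lemma r2_pLap_r2_pow_mul (n k d : ℕ) (h : MvPolynomial (Fin n) ℝ)
    (hhom : h.IsHomogeneous d) (hharm : pLap n h = 0) :
    r2 n * pLap n (r2 n ^ k * h) =
      C (2 * (k : ℝ) * (2 * (k : ℝ) + 2 * (d : ℝ) + (n : ℝ) - 2)) * (r2 n ^ k * h) := by
  rcases k with _ | k
  · rw [pow_zero, one_mul, hharm, mul_zero, Nat.cast_zero]
    norm_num
  -- k + 1 case
  have hd : prdr n h = C ((d : ℝ)) * h := euler n d h hhom
  have key : pLap n (r2 n ^ (k + 1) * h) =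
      C (2 * ((k : ℝ) + 1) * (2 * (k : ℝ) + 2 * (d : ℝ) + (n : ℝ))) * (r2 n ^ k * h) := by
    unfold pLap
    have step : ∀ i : Fin n, pderiv i (pderiv i (r2 n ^ (k + 1) * h)) =
        C (2 * ((k : ℝ) + 1)) *
          (r2 n ^ k * h + X i * pderiv i (r2 n ^ k * h) + X i * (r2 n ^ k * pderiv i h))
          + r2 n ^ (k + 1) * pderiv i (pderiv i h) := by
      intro i
      rw [pderiv_mul (f := r2 n ^ (k + 1)) (g := h), map_add,
        pderiv_mul (f := r2 n ^ (k + 1)) (g := pderiv i h),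
        pderiv_r2_pow n (k + 1)]
      simp only [Nat.add_sub_cancel]
      rw [pderiv_mul, pderiv_C_mul, pderiv_mul, pderiv_X_self,
        pderiv_mul (f := r2 n ^ k) (g := h), pderiv_r2_pow n k]
      push_cast
      ring
    rw [Finset.sum_congr rfl fun i _ => step i]
    rw [Finset.sum_add_distrib, ← Finset.mul_sum, ← Finset.mul_sum,
      show (∑ i : Fin n, pderiv i (pderiv i h)) = pLap n h from rfl, hharm, mul_zero, add_zero]
    rw [Finset.sum_add_distrib, Finset.sum_add_distrib]
    rw [show (∑ _i : Fin n, r2 n ^ k * h) = (n : MvPolynomial (Fin n) ℝ) * (r2 n ^ k * h) by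
      rw [Finset.sum_const, Finset.card_univ, Fintype.card_fin, nsmul_eq_mul]]
    rw [show (∑ i : Fin n, X i * pderiv i (r2 n ^ k * h)) = prdr n (r2 n ^ k * h) from rfl]
    rw [show (∑ i : Fin n, X i * (r2 n ^ k * pderiv i h))
        = r2 n ^ k * prdr n h from by
          rw [prdr, Finset.mul_sum]; exact Finset.sum_congr rfl (fun i _ => by ring)]
    have hprdr : prdr n (r2 n ^ k * h) = C (2 * (k : ℝ) + (d : ℝ)) * (r2 n ^ k * h) := by
      rw [prdr_mul, euler n (2 * k) (r2 n ^ k) ((r2_isHomogeneous n).pow k), hd, C_add]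
      push_cast; ring
    rw [hprdr, hd, show ((n : MvPolynomial (Fin n) ℝ)) = C ((n : ℝ)) from (map_natCast C n).symm]
    rw [show r2 n ^ k * (C ((d:ℝ)) * h) = C ((d:ℝ)) * (r2 n ^ k * h) from by ring,
      ← add_mul, ← add_mul, ← C_add, ← C_add, ← mul_assoc, ← C_mul]
    exact C_mul_congr _ (by ring)
  rw [key, show r2 n * (C (2 * ((k:ℝ) + 1) * (2 * (k:ℝ) + 2 * (d:ℝ) + (n:ℝ)))
      * (r2 n ^ k * h)) = C (2 * ((k:ℝ) + 1) * (2 * (k:ℝ) + 2 * (d:ℝ) + (n:ℝ)))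
      * (r2 n ^ (k + 1) * h) from by ring]
  push_cast
  exact C_mul_congr _ (by ring)

/-- The eigenvalue identity for `A_α` on `r^{2k} h`. -/
lemma Apol_eigen (n k d : ℕ) (α : ℝ) (h : MvPolynomial (Fin n) ℝ)
    (hhom : h.IsHomogeneous d) (hharm : pLap n h = 0) :
    Apol n α (r2 n ^ k * h) =
      C (2 * (k : ℝ) * (2 * (k : ℝ) + 2 * (d : ℝ) + (n : ℝ) - 2)
          + 2 * α * (2 * (k : ℝ) + (d : ℝ)) + α * (α + (n : ℝ) - 2)) * (r2 n ^ k * h) := by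
  unfold Apol
  rw [r2_pLap_r2_pow_mul n k d h hhom hharm]
  have hprdr : prdr n (r2 n ^ k * h) = C (2 * (k : ℝ) + (d : ℝ)) * (r2 n ^ k * h) := by
    rw [prdr_mul, euler n (2 * k) (r2 n ^ k) ((r2_isHomogeneous n).pow k),
      euler n d h hhom, C_add]
    push_cast; ring
  rw [hprdr, ← mul_assoc (C (2 * α)), ← C_mul, C_add, C_add, add_mul, add_mul]

/-- For `0 ≤ k ≤ ⌊m/2⌋` and `h ∈ H_{m-2k}` (harmonic homogeneous of degree
`m-2k`), the composition `A_{2-n} A_{4-n}` acts on `p = r^{2k} h` as multiplication by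
`(2m - 2k)(2m - 2k + 2)(2k + 2 - n)(2k + 4 - n)`. -/
theorem stmt7 (n m k : ℕ) (hk : 2 * k ≤ m) (h : MvPolynomial (Fin n) ℝ)
    (hhom : h.IsHomogeneous (m - 2 * k)) (hharm : pLap n h = 0) :
    Apol n (2 - (n : ℝ)) (Apol n (4 - (n : ℝ)) (r2 n ^ k * h)) =
      C ((2 * (m : ℝ) - 2 * (k : ℝ)) * (2 * (m : ℝ) - 2 * (k : ℝ) + 2) *
          (2 * (k : ℝ) + 2 - (n : ℝ)) * (2 * (k : ℝ) + 4 - (n : ℝ))) * (r2 n ^ k * h) := by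
  have hd : ((m - 2 * k : ℕ) : ℝ) = (m : ℝ) - 2 * (k : ℝ) := by
    push_cast [Nat.cast_sub hk]; ring
  rw [Apol_eigen n k (m - 2 * k) (4 - (n : ℝ)) h hhom hharm,
    Apol_C_mul, Apol_eigen n k (m - 2 * k) (2 - (n : ℝ)) h hhom hharm,
    ← mul_assoc, ← C_mul]
  rw [hd]
  exact C_mul_congr _ (by ring)
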